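/- Let θ ∈ ℝ^d be a unit vector with |θ_ℓ| < 1 for some ℓ ∈ {1,…,d}, let g : ℝ → ℝ be measurable with g(θᵀX) square-integrable for X ~ N(0, I_d), and let f(x) = g(θᵀx). Define the preintegrated function f̄_ℓ(x) = ∫_{−∞}^{∞} φ(x_ℓ) f(x) dx_ℓ. Then f̄_ℓ is again a ridge function: f̄_ℓ(x) = ḡ_ℓ(θ_ℓ^{*T} x) where θ_ℓ^* is the unit vector obtained from θ by replacing θ_ℓ with 0 and dividing by (1 − θ_ℓ²)^{1/2}, and ḡ_ℓ(y) = ∫_{−∞}^{∞} φ(x) g(θ_ℓ x + (1 − θ_ℓ²)^{1/2} y) dx. Moreover, if g satisfies |g(y) − g(y′)| ≤ C|y − y′|^α for all y, y′ ∈ ℝ with C < ∞ and α ∈ (0,1], then ḡ_ℓ satisfies the Hölder condition with the same exponent α and constant (1 − θ_ℓ²)^{α/2} C. -/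

import Mathlib

open MeasureTheory ProbabilityTheory Real Filter

noncomputable section

/-- Standard Gaussian measure `N(0, I_d)` on `ℝ^d`. -/
def stdGaussian (d : ℕ) : Measure (Fin d → ℝ) :=
  Measure.pi fun _ => gaussianReal 0 1

/-- Sobol' total index `τ̄²_j(f) = (1/2)·E[(f(X) − f(X_{−j}:Z_j))²]`. -/
def sobolTau (d : ℕ) (f : (Fin d → ℝ) → ℝ) (j : Fin d) : ℝ :=
  (1 / 2) * ∫ p : (Fin d → ℝ) × (Fin d → ℝ),
    (f p.1 - f (Function.update p.1 j (p.2 j))) ^ 2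
      ∂((stdGaussian d).prod (stdGaussian d))

/-- Mean dimension `ν(f) = (Σ_j τ̄²_j(f)) / Var(f(X))`. -/
def meanDim (d : ℕ) (f : (Fin d → ℝ) → ℝ) : ℝ :=
  (∑ j, sobolTau d f j) / variance f (stdGaussian d)

/-- Gaussian fractional absolute moment `M_η = 2^{η/2} Γ((η+1)/2) / √π`. -/
def Mmom (η : ℝ) : ℝ := 2 ^ (η / 2) / Real.sqrt π * Real.Gamma ((η + 1) / 2)

/-- Standard normal CDF `Φ`. -/
def Phi (t : ℝ) : ℝ := ((gaussianReal 0 1) (Set.Iic t)).toReal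

/-- Standard normal density `φ`. -/
def gpdf (x : ℝ) : ℝ := Real.exp (-x ^ 2 / 2) / Real.sqrt (2 * π)


/-- Preintegration of `f` over coordinate `ℓ` with the standard Gaussian
weight: `f̄_ℓ(x) = ∫ φ(x_ℓ) f(x) dx_ℓ`. -/
def preint (d : ℕ) (f : (Fin d → ℝ) → ℝ) (ℓ : Fin d) (x : Fin d → ℝ) : ℝ :=
  ∫ z : ℝ, gpdf z * f (Function.update x ℓ z)

/-- Proposition 5.1: preintegration of a ridge function is again a ridge
function, and any Hölder condition is preserved with constant
`(1 − θ_ℓ²)^{α/2} C`. -/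
theorem stmt15 (d : ℕ) (θ : Fin d → ℝ) (hθ : ∑ j, θ j ^ 2 = 1)
    (ℓ : Fin d) (hℓ : |θ ℓ| < 1)
    (g : ℝ → ℝ) (hgm : Measurable g)
    (hL2 : MemLp (fun x : Fin d → ℝ => g (∑ j, θ j * x j)) 2 (stdGaussian d))
    (f : (Fin d → ℝ) → ℝ) (hf : ∀ x, f x = g (∑ j, θ j * x j))
    (θstar : Fin d → ℝ)
    (hθstar : ∀ j, θstar j
      = (if j = ℓ then 0 else θ j) / Real.sqrt (1 - θ ℓ ^ 2))
    (gbar : ℝ → ℝ)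
    (hgbar : ∀ y, gbar y
      = ∫ z : ℝ, gpdf z * g (θ ℓ * z + Real.sqrt (1 - θ ℓ ^ 2) * y)) :
    (∀ x, preint d f ℓ x = gbar (∑ j, θstar j * x j))
    ∧ (∀ C α : ℝ, 0 < α → α ≤ 1 →
        (∀ y y' : ℝ, |g y - g y'| ≤ C * |y - y'| ^ α) →
        ∀ y y' : ℝ,
          |gbar y - gbar y'| ≤ (1 - θ ℓ ^ 2) ^ (α / 2) * C * |y - y'| ^ α) := by

  have hθ2 : θ ℓ ^ 2 < 1 := by
    have h := abs_lt.mp hℓ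
    nlinarith [sq_abs (θ ℓ), abs_nonneg (θ ℓ)]
  have h1pos : 0 < 1 - θ ℓ ^ 2 := by linarith
  set s : ℝ := Real.sqrt (1 - θ ℓ ^ 2) with hs_def
  have hspos : 0 < s := Real.sqrt_pos.mpr h1pos
  have hgpdfm : Measurable gpdf := by
    have : Measurable fun x : ℝ => Real.exp (-x ^ 2 / 2) :=
      Real.measurable_exp.comp (((measurable_id.pow_const 2).neg).div_const 2)
    exact this.div_const _
  have hgpdf_nonneg : ∀ z : ℝ, 0 ≤ gpdf z := by
    intro z
    unfold gpdf
    positivity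
  have heq : ∀ z : ℝ, gpdf z = Real.exp (-(1/2) * z ^ 2) / Real.sqrt (2 * π) := by
    intro z
    unfold gpdf
    rw [show -z ^ 2 / 2 = -(1/2) * z ^ 2 by ring]
  have hgpdf_int : Integrable gpdf := by
    have h : Integrable (fun z : ℝ => Real.exp (-(1/2) * z ^ 2)) :=
      integrable_exp_neg_mul_sq (by norm_num)
    have := h.div_const (Real.sqrt (2 * π))
    exact this.congr (Filter.Eventually.of_forall fun z => (heq z).symm)
  have hgpdf_one : ∫ z : ℝ, gpdf z = 1 := by
    simp_rw [heq, integral_div, integral_gaussian (1/2 : ℝ)]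
    rw [div_eq_one_iff_eq]
    · congr 1
      ring
    · positivity
  have hsum : ∀ (x : Fin d → ℝ) (z : ℝ),
      (∑ j, θ j * Function.update x ℓ z j)
        = θ ℓ * z + s * ∑ j, θstar j * x j := by
    intro x z
    have h1 : ∀ j : Fin d, θ j * Function.update x ℓ z j
        = (if j = ℓ then θ ℓ * z else 0) + s * (θstar j * x j) := by
      intro j
      rcases eq_or_ne j ℓ with h | h
      · subst h
        simp [Function.update_self, hθstar]
      · rw [Function.update_of_ne h, hθstar j]
        simp only [if_neg h, zero_add]
        rw [show s * (θ j / s * x j) = s / s * (θ j * x j) by ring,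
          div_self (ne_of_gt hspos), one_mul]
    rw [Finset.mul_sum]
    simp_rw [h1, Finset.sum_add_distrib, Finset.sum_ite_eq' Finset.univ ℓ,
      Finset.mem_univ, if_true]
  constructor
  · intro x
    simp only [preint, hgbar]
    congr 1
    funext z
    rw [hf, hsum]
  · intro C α hα hα1 hHol y y'
    have hC : 0 ≤ C := by
      have h := hHol 0 1
      have h2 : |(0:ℝ) - 1| = 1 := by norm_num
      rw [h2, Real.one_rpow, mul_one] at h
      exact le_trans (abs_nonneg _) h
    set K : ℝ := (1 - θ ℓ ^ 2) ^ (α / 2) * C * |y - y'| ^ α with hK_def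
    have hKnonneg : 0 ≤ K := by
      apply mul_nonneg (mul_nonneg _ hC) (Real.rpow_nonneg (abs_nonneg _) _)
      exact Real.rpow_nonneg (le_of_lt h1pos) _
    have hsα : s ^ α = (1 - θ ℓ ^ 2) ^ (α / 2) := by
      rw [hs_def, Real.sqrt_eq_rpow, ← Real.rpow_mul (le_of_lt h1pos)]
      congr 1
      ring
    set F : ℝ → ℝ → ℝ := fun y z => gpdf z * g (θ ℓ * z + s * y) with hF_def
    have hFm : ∀ y : ℝ, Measurable (F y) := by
      intro y
      exact hgpdfm.mul (hgm.comp ((measurable_id.const_mul (θ ℓ)).add_const (s * y)))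
    have hbound : ∀ z : ℝ, |F y z - F y' z| ≤ gpdf z * K := by
      intro z
      have h1 : F y z - F y' z
          = gpdf z * (g (θ ℓ * z + s * y) - g (θ ℓ * z + s * y')) := by
        simp [hF_def]; ring
      rw [h1, abs_mul, abs_of_nonneg (hgpdf_nonneg z)]
      apply mul_le_mul_of_nonneg_left _ (hgpdf_nonneg z)
      calc |g (θ ℓ * z + s * y) - g (θ ℓ * z + s * y')|
          ≤ C * |(θ ℓ * z + s * y) - (θ ℓ * z + s * y')| ^ α := hHol _ _
        _ = C * (s * |y - y'|) ^ α := by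
            rw [show (θ ℓ * z + s * y) - (θ ℓ * z + s * y') = s * (y - y') by ring,
              abs_mul, abs_of_pos hspos]
        _ = K := by
            rw [Real.mul_rpow (le_of_lt hspos) (abs_nonneg _), hsα, hK_def]
            ring
    have hdiff_int : Integrable (fun z => F y z - F y' z) := by
      apply Integrable.mono' (hgpdf_int.mul_const K)
        (((hFm y).sub (hFm y')).aestronglyMeasurable)
      exact Filter.Eventually.of_forall fun z => by
        rw [Real.norm_eq_abs]; exact hbound z
    by_cases hI : Integrable (F y')
    · have hIy : Integrable (F y) := by
        have h := hI.add hdiff_int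
        exact h.congr (Filter.Eventually.of_forall fun z => by simp)
      rw [hgbar y, hgbar y']
      have hgy : (∫ z : ℝ, gpdf z * g (θ ℓ * z + s * y)) = ∫ z, F y z := rfl
      have hgy' : (∫ z : ℝ, gpdf z * g (θ ℓ * z + s * y')) = ∫ z, F y' z := rfl
      rw [hgy, hgy', ← integral_sub hIy hI]
      have h1 : |∫ z, (F y z - F y' z)| ≤ ∫ z, gpdf z * K := by
        rw [← Real.norm_eq_abs]
        apply norm_integral_le_of_norm_le (hgpdf_int.mul_const K)
        exact Filter.Eventually.of_forall fun z => by
          rw [Real.norm_eq_abs]; exact hbound z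
      calc |∫ z, (F y z - F y' z)| ≤ ∫ z, gpdf z * K := h1
        _ = K := by rw [MeasureTheory.integral_mul_const, hgpdf_one, one_mul]
        _ = (1 - θ ℓ ^ 2) ^ (α / 2) * C * |y - y'| ^ α := rfl
    · have hIy : ¬ Integrable (F y) := by
        intro h
        exact hI ((h.sub hdiff_int).congr
          (Filter.Eventually.of_forall fun z => by simp))
      rw [hgbar y, hgbar y']
      have hgy : (∫ z : ℝ, gpdf z * g (θ ℓ * z + s * y)) = ∫ z, F y z := rfl
      have hgy' : (∫ z : ℝ, gpdf z * g (θ ℓ * z + s * y')) = ∫ z, F y' z := rfl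
      rw [hgy, hgy', integral_undef hIy, integral_undef hI]
      simpa using hKnonneg

end
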